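/- Let x, y, z, x', y', z' > 0 be real numbers with x ≥ y, x ≥ z, x' ≥ y', x' ≥ z'. If xyz = x'y'z', 4yz/x = 4y'z'/x', and 8(x+y+z) − 2(xy+yz+zx)²/(xyz) = 8(x'+y'+z') − 2(x'y'+y'z'+z'x')²/(x'y'z'), then x = x', {y, z} = {y', z'} as multisets; in particular (x', y', z') is a permutation of (x, y, z). -/

import Mathlib

/-- if `x` (resp. `x'`) is maximal, and the two metrics share the volume
(`σ₃`), the smallest coclosed eigenvalue `4yz/x` and the scalar curvature
`8σ₁ − 2σ₂²/σ₃`, then `x = x'` and `{y, z} = {y', z'}` as multisets; in particular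
`(x', y', z')` is a permutation of `(x, y, z)`. -/
theorem spectral_determination_coclosed_case
    (x y z x' y' z' : ℝ)
    (hx : 0 < x) (hy : 0 < y) (hz : 0 < z)
    (hx' : 0 < x') (hy' : 0 < y') (hz' : 0 < z')
    (hxy : y ≤ x) (hxz : z ≤ x) (hxy' : y' ≤ x') (hxz' : z' ≤ x')
    (hvol : x*y*z = x'*y'*z')
    (hlam : 4*y*z/x = 4*y'*z'/x')
    (hscal : 8*(x + y + z) - 2*(x*y + y*z + z*x)^2/(x*y*z)
      = 8*(x' + y' + z') - 2*(x'*y' + y'*z' + z'*x')^2/(x'*y'*z')) :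
    x = x' ∧ ({y, z} : Multiset ℝ) = ({y', z'} : Multiset ℝ) := by
  have hxne : x ≠ 0 := ne_of_gt hx
  have hxne' : x' ≠ 0 := ne_of_gt hx'
  have h1 : y*z*x' = y'*z'*x := by
    field_simp at hlam
    linarith
  have hp : y*z = y'*z' := by
    nlinarith [mul_pos hx hx', mul_pos hy hz, mul_pos hy' hz']
  have hxx : x = x' := by
    have : (y*z) * x = (y*z) * x' := by
      rw [hp]; nlinarith [hvol]
    exact mul_left_cancel₀ (ne_of_gt (mul_pos hy hz)) this
  subst hxx
  have hs : y + z = y' + z' := by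
    have hE0 : 2*x^2*(y*z) * ((y + z - y' - z') * (x*(y + z + y' + z') - 2*(y*z))) = 0 := by
      have hne : x*y*z ≠ 0 := by positivity
      have hne' : x*y'*z' ≠ 0 := by positivity
      field_simp at hscal
      linear_combination (-x) * hscal +
        (2*x^3*(y+z)^2 - 4*x^2*(y*z)*(y+z-y'-z') - 2*x*(y*z)*(y'*z')) * hp
    have hE : (y + z - y' - z') * (x*(y + z + y' + z') - 2*(y*z)) = 0 := by
      have h2 : (2*x^2*(y*z) : ℝ) ≠ 0 := by positivity
      exact (mul_eq_zero.mp hE0).resolve_left h2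
    have hpos : x*(y + z + y' + z') - 2*(y*z) > 0 := by
      nlinarith [mul_pos hy' hz', mul_pos hx hy', mul_pos hx hz']
    have := mul_eq_zero.mp hE
    rcases this with h | h
    · linarith
    · linarith
  refine ⟨rfl, ?_⟩
  have hcase : (y - y') * (y - z') = 0 := by nlinarith [hp, hs]
  rcases mul_eq_zero.mp hcase with h | h
  · have hy'' : y = y' := by linarith
    have hz'' : z = z' := by linarith
    rw [hy'', hz'']
  · have hy'' : y = z' := by linarith
    have hz'' : z = y' := by linarith
    rw [hy'', hz'']
    exact Multiset.pair_comm z' y'
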